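/- In the setup below, for every arrival order π, the expected reward of the gambler over the randomness of the coin flips is at least Σ_{j=1}^{j*−2} W_j·2^{−(j+1)} + W_{j*−1}·2^{−(j*−1)}. -/

import Mathlib

/-- Maximum of a function on `Fin n`, for `n > 0`. -/
noncomputable def finMax {n : ℕ} (hn : 0 < n) (f : Fin n → ℝ) : ℝ :=
  Finset.univ.sup' (Finset.univ_nonempty_iff.mpr (Fin.pos_iff_nonempty.mp hn)) f

/-- The gambler's reward when the values `X` arrive in the order given by the
permutation `π` and the gambler accepts the first arriving value strictly
exceeding the threshold `max_i X̃ i` (reward `0` if no value does). -/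
noncomputable def gamblerReward {n : ℕ} (hn : 0 < n) (π : Equiv.Perm (Fin n))
    (X Xt : Fin n → ℝ) : ℝ :=
  if h : (Finset.univ.filter (fun k => finMax hn Xt < X (π k))).Nonempty then
    X (π ((Finset.univ.filter (fun k => finMax hn Xt < X (π k))).min' h))
  else 0

open scoped Classical

/-- Counting functions agreeing with a fixed function on a finset. -/
lemma card_agree {n : ℕ} (T : Finset (Fin n)) (f : Fin n → Bool)
    [inst : DecidablePred fun C : Fin n → Bool => ∀ i ∈ T, C i = f i] :
    (Finset.univ.filter (fun C : Fin n → Bool => ∀ i ∈ T, C i = f i)).card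
      = 2 ^ (n - T.card) := by
  have hcard : (Finset.univ : Finset ({ i : Fin n // i ∉ T } → Bool)).card = 2 ^ (n - T.card) := by
    rw [Finset.card_univ, Fintype.card_fun, Fintype.card_bool]
    congr 1
    have := Fintype.card_subtype_compl (fun i : Fin n => i ∈ T)
    rw [this, Fintype.card_fin]
    simp [Fintype.card_coe]
  rw [← hcard]
  apply Finset.card_bij' (fun C _ => fun i => C i.1)
    (fun g _ => fun i => if h : i ∈ T then f i else g ⟨i, h⟩)
  · intro C hC
    simp only [Finset.mem_filter, Finset.mem_univ, true_and] at hC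
    funext i
    by_cases h : i ∈ T
    · simp [h, hC i h]
    · simp [h]
  · intro g hg
    funext i
    simp [i.2]
  · intro C hC; simp
  · intro g hg
    simp only [Finset.mem_filter, Finset.mem_univ, true_and]
    intro i hi; simp [hi]

/-- Counting coin configurations with `j` prescribed coordinates. -/
lemma card_event {n : ℕ} (ι : ℕ → Fin n) (j : ℕ)
    (hinj : Set.InjOn ι (Finset.Icc 1 j)) (b : ℕ → Bool)
    [inst : DecidablePred fun C : Fin n → Bool => ∀ k ∈ Finset.Icc 1 j, C (ι k) = b k] :
    (Finset.univ.filter (fun C : Fin n → Bool => ∀ k ∈ Finset.Icc 1 j, C (ι k) = b k)).card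
      = 2 ^ (n - j) := by
  set T : Finset (Fin n) := (Finset.Icc 1 j).image ι with hT
  have hTcard : T.card = j := by
    rw [hT, Finset.card_image_of_injOn hinj, Nat.card_Icc]
    omega
  set f : Fin n → Bool := fun i =>
    if h : ∃ k, k ∈ Finset.Icc 1 j ∧ ι k = i then b h.choose else false with hf
  have hfval : ∀ k ∈ Finset.Icc 1 j, f (ι k) = b k := by
    intro k hk
    have hex : ∃ k', k' ∈ Finset.Icc 1 j ∧ ι k' = ι k := ⟨k, hk, rfl⟩
    have hspec := hex.choose_spec
    have : hex.choose = k := hinj (by simpa using hspec.1) (by simpa using hk) hspec.2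
    simp only [hf, dif_pos hex, this]
  have heq : (Finset.univ.filter (fun C : Fin n → Bool => ∀ k ∈ Finset.Icc 1 j, C (ι k) = b k))
      = (Finset.univ.filter (fun C : Fin n → Bool => ∀ i ∈ T, C i = f i)) := by
    ext C
    simp only [Finset.mem_filter, Finset.mem_univ, true_and]
    constructor
    · intro h i hi
      obtain ⟨k, hk, rfl⟩ := Finset.mem_image.mp hi
      rw [h k hk, hfval k hk]
    · intro h k hk
      rw [h (ι k) (Finset.mem_image_of_mem ι hk), hfval k hk]
  rw [heq, card_agree, hTcard]

noncomputable def indic (p : Prop) (w : ℝ) : ℝ := if p then w else 0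

lemma indic_pos {p : Prop} (h : p) (w : ℝ) : indic p w = w := by
  simp [indic, h]

lemma indic_neg {p : Prop} (h : ¬p) (w : ℝ) : indic p w = 0 := by
  simp [indic, h]

lemma sum_indic_const {α : Type*} [Fintype α] (p : α → Prop) [DecidablePred p] (w : ℝ) :
    ∑ C : α, indic (p C) w = ((Finset.univ.filter p).card : ℝ) * w := by
  have h : ∀ C, indic (p C) w = if p C then w else 0 := by
    intro C
    by_cases hp : p C
    · simp [indic, hp]
    · simp [indic, hp]
  rw [Finset.sum_congr rfl (fun C _ => h C), Finset.sum_ite, Finset.sum_const,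
    Finset.sum_const_zero, add_zero, nsmul_eq_mul]

lemma pow_sub_eq {a b : ℕ} (h : a ≤ b) : (2:ℝ) ^ (b - a) = 2 ^ b / 2 ^ a := by
  rw [eq_div_iff (by positivity), ← pow_add]
  congr 1
  omega

/-- Main pointwise lemma: if the coins put `W 1, …, W (j-1)` on the gambler's
side and `W j` on the threshold side, the reward is at least `W (j-1)`. -/
lemma reward_ge {n : ℕ} (hn : 0 < n) (Y Z : Fin n → ℝ)
    (hYZ : ∀ i, Z i < Y i)
    (hdistinct : Function.Injective (Sum.elim Y Z))
    (W : ℕ → ℝ) (hWanti : StrictAntiOn W (Set.Icc 1 (2 * n)))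
    (hWrange : (Finset.Icc 1 (2 * n)).image W
      = Finset.univ.image Y ∪ Finset.univ.image Z)
    (ι : ℕ → Fin n) (π : Equiv.Perm (Fin n))
    (j : ℕ) (hj2 : 2 ≤ j) (hj2n : j ≤ 2 * n) (C : Fin n → Bool)
    (h1 : ∀ k, 1 ≤ k → k < j → (if C (ι k) then Y (ι k) else Z (ι k)) = W k)
    (h2 : (if C (ι j) then Z (ι j) else Y (ι j)) = W j) :
    W (j - 1) ≤ gamblerReward hn π (fun i => if C i then Y i else Z i)
      (fun i => if C i then Z i else Y i) := by
  set X : Fin n → ℝ := fun i => if C i then Y i else Z i with hX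
  set Xt : Fin n → ℝ := fun i => if C i then Z i else Y i with hXt
  have hYY : ∀ a b, Y a = Y b → a = b := by
    intro a b h
    have := @hdistinct (Sum.inl a) (Sum.inl b) h
    simpa using this
  have hZZ : ∀ a b, Z a = Z b → a = b := by
    intro a b h
    have := @hdistinct (Sum.inr a) (Sum.inr b) h
    simpa using this
  have hYZne : ∀ a b, Y a ≠ Z b := by
    intro a b h
    have := @hdistinct (Sum.inl a) (Sum.inr b) h
    simp at this
  have hWle : ∀ a b, 1 ≤ a → a ≤ b → b ≤ 2 * n → W b ≤ W a := by
    intro a b ha hab hb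
    rcases eq_or_lt_of_le hab with h | h
    · exact le_of_eq (h ▸ rfl)
    · exact le_of_lt (hWanti ⟨ha, le_trans hab hb⟩ ⟨le_trans ha hab, hb⟩ h)
  have hval : ∀ v : ℝ, (∃ i, v = Y i ∨ v = Z i) → ∃ m, 1 ≤ m ∧ m ≤ 2 * n ∧ W m = v := by
    intro v ⟨i, hv⟩
    have hv' : v ∈ (Finset.Icc 1 (2 * n)).image W := by
      rw [hWrange]
      rcases hv with h | h
      · exact Finset.mem_union_left _ (Finset.mem_image.mpr ⟨i, Finset.mem_univ i, h.symm⟩)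
      · exact Finset.mem_union_right _ (Finset.mem_image.mpr ⟨i, Finset.mem_univ i, h.symm⟩)
    obtain ⟨m, hm, hWm⟩ := Finset.mem_image.mp hv'
    rw [Finset.mem_Icc] at hm
    exact ⟨m, hm.1, hm.2, hWm⟩
  have hXval : ∀ i, ∃ m, 1 ≤ m ∧ m ≤ 2 * n ∧ W m = X i := by
    intro i
    apply hval
    refine ⟨i, ?_⟩
    by_cases h : C i <;> simp [hX, h]
  have hXtval : ∀ i, ∃ m, 1 ≤ m ∧ m ≤ 2 * n ∧ W m = Xt i := by
    intro i
    apply hval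
    refine ⟨i, ?_⟩
    by_cases h : C i <;> simp [hXt, h]
  have hXne : ∀ i, X i ≠ Xt i := by
    intro i
    by_cases h : C i <;> simp [hX, hXt, h, (hYZ i).ne', (hYZ i).ne]
  have hXtsmall : ∀ i, ∀ m, 1 ≤ m → m < j → Xt i ≠ W m := by
    intro i m hm1 hmj habs
    have hXm : X (ι m) = W m := h1 m hm1 hmj
    by_cases hi : i = ι m
    · exact hXne (ι m) (by rw [hXm, ← hi, habs])
    · have h3 : Xt i = X (ι m) := by rw [habs, hXm]
      by_cases hc1 : C i <;> by_cases hc2 : C (ι m) <;>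
        simp only [hX, hXt, hc1, hc2, if_pos, if_neg, Bool.not_eq_true] at h3
      · exact hYZne _ _ h3.symm
      · exact hi (hZZ _ _ h3)
      · exact hi (hYY _ _ h3)
      · exact hYZne _ _ h3
  have hjmem : (j : ℕ) ∈ Set.Icc 1 (2 * n) := ⟨by omega, hj2n⟩
  have h1mem : (1 : ℕ) ∈ Set.Icc 1 (2 * n) := ⟨le_rfl, by omega⟩
  have hmax : finMax hn Xt = W j := by
    apply le_antisymm
    · apply Finset.sup'_le
      intro i _
      obtain ⟨m, hm1, hm2, hWm⟩ := hXtval i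
      rcases lt_or_ge m j with hmj | hmj
      · exact absurd hWm.symm (hXtsmall i m hm1 hmj)
      · rw [← hWm]
        exact hWle j m (by omega) hmj hm2
    · have hXtj : Xt (ι j) = W j := h2
      rw [← hXtj]
      exact Finset.le_sup' Xt (Finset.mem_univ (ι j))
  have hW1j : W j < W 1 := hWanti h1mem hjmem (by omega)
  have hne : (Finset.univ.filter (fun k => finMax hn Xt < X (π k))).Nonempty := by
    refine ⟨π⁻¹ (ι 1), ?_⟩
    simp only [Finset.mem_filter, Finset.mem_univ, true_and]
    rw [hmax]
    have hX1 : X (π (π⁻¹ (ι 1))) = W 1 := by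
      rw [Equiv.Perm.coe_inv, Equiv.apply_symm_apply]
      exact h1 1 le_rfl (by omega)
    rw [hX1]
    exact hW1j
  rw [gamblerReward, dif_pos hne]
  set m0 := (Finset.univ.filter (fun k => finMax hn Xt < X (π k))).min' hne with hm0def
  have hm0 : m0 ∈ Finset.univ.filter (fun k => finMax hn Xt < X (π k)) :=
    Finset.min'_mem _ hne
  rw [Finset.mem_filter, hmax] at hm0
  obtain ⟨m, hm1, hm2, hWm⟩ := hXval (π m0)
  have hmj : m < j := by
    by_contra hcon
    push_neg at hcon
    have := hWle j m (by omega) hcon hm2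
    rw [hWm] at this
    linarith [hm0.2]
  calc W (j - 1) ≤ W m := hWle m (j - 1) hm1 (by omega) (by omega)
    _ = X (π m0) := hWm

/-- **Gambler's expected reward lower bound** (Proposition 3.4 of the paper).
With the `2n` distinct values `Y i > Z i ≥ 0` relabeled in decreasing order as
`W 1 > … > W (2n)` and pivotal index `jstar`, for every arrival order `π`, the
expectation over the `n` independent fair coin flips `C` (where `X i = Y i`,
`X̃ i = Z i` if `C i` is heads and `X i = Z i`, `X̃ i = Y i` otherwise) of the
gambler's reward (accepting the first arriving `X` value exceeding
`max_i X̃ i`) is at least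
`∑_{j=1}^{jstar-2} W j / 2^(j+1) + W (jstar-1) / 2^(jstar-1)`. -/
theorem gambler_expected_reward
    -- the `2n` values: `Y i > Z i ≥ 0` for each pair `i`, all distinct
    (n : ℕ) (hn : 0 < n) (Y Z : Fin n → ℝ)
    (hZnonneg : ∀ i, 0 ≤ Z i) (hYZ : ∀ i, Z i < Y i)
    (hdistinct : Function.Injective (Sum.elim Y Z))
    -- `W 1 > W 2 > … > W (2n)` is the decreasing relabeling of the `2n` values
    (W : ℕ → ℝ) (hWanti : StrictAntiOn W (Set.Icc 1 (2 * n)))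
    (hWrange : (Finset.Icc 1 (2 * n)).image W
      = Finset.univ.image Y ∪ Finset.univ.image Z)
    -- `ι j` is the index of the pair containing `W j`
    (ι : ℕ → Fin n)
    (hι : ∀ j ∈ Finset.Icc 1 (2 * n), W j = Y (ι j) ∨ W j = Z (ι j))
    -- `jstar` is the pivotal index: the least `j` whose pair index repeats an earlier one
    (jstar : ℕ)
    (hjstar : IsLeast {j : ℕ | j ∈ Finset.Icc 1 (2 * n)
      ∧ ∃ ℓ, 1 ≤ ℓ ∧ ℓ < j ∧ ι ℓ = ι j} jstar)
    (π : Equiv.Perm (Fin n)) :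
    (∑ j ∈ Finset.Icc 1 (jstar - 2), W j / 2 ^ (j + 1))
        + W (jstar - 1) / 2 ^ (jstar - 1)
      ≤ (∑ C : Fin n → Bool,
          gamblerReward hn π (fun i => if C i then Y i else Z i)
            (fun i => if C i then Z i else Y i)) / 2 ^ n := by
  obtain ⟨⟨hjmem, ℓ, hℓ1, hℓjs, hℓι⟩, hmin⟩ := hjstar
  rw [Finset.mem_Icc] at hjmem
  obtain ⟨hjs1, hjs2n⟩ := hjmem
  have hjs2 : 2 ≤ jstar := by omega
  -- injectivity of ι on [1, jstar-1]
  have hinj : Set.InjOn ι (Finset.Icc 1 (jstar - 1)) := by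
    intro a ha b hb hab
    simp only [Finset.coe_Icc, Set.mem_Icc] at ha hb
    by_contra hne
    rcases Nat.lt_or_ge a b with h | h
    · have : jstar ≤ b := hmin ⟨Finset.mem_Icc.mpr ⟨by omega, by omega⟩, a, ha.1, h, hab⟩
      omega
    · have h' : b < a := by omega
      have : jstar ≤ a := hmin ⟨Finset.mem_Icc.mpr ⟨by omega, by omega⟩, b, hb.1, h', hab.symm⟩
      omega
  have hjsn : jstar - 1 ≤ n := by
    have h := Finset.card_le_card_of_injOn ι (fun a _ => Finset.mem_univ (ι a)) hinj
    rw [Nat.card_Icc, Finset.card_univ, Fintype.card_fin] at h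
    omega
  -- `side k` records whether `W k` is the `Y` value of its pair
  set side : ℕ → Bool := fun k => decide (W k = Y (ι k)) with hsidedef
  have hXside : ∀ (C : Fin n → Bool) k, 1 ≤ k → k ≤ 2 * n → C (ι k) = side k →
      (if C (ι k) then Y (ι k) else Z (ι k)) = W k := by
    intro C k hk1 hk2 hc
    by_cases hs : W k = Y (ι k)
    · have hst : side k = true := by simp [hsidedef, hs]
      rw [hc, hst]
      simp [hs]
    · have hsf : side k = false := by simp [hsidedef, hs]
      have hz : W k = Z (ι k) := (hι k (Finset.mem_Icc.mpr ⟨hk1, hk2⟩)).resolve_left hs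
      rw [hc, hsf]
      simp [hz]
  have hXtside : ∀ (C : Fin n → Bool) k, 1 ≤ k → k ≤ 2 * n → C (ι k) = !side k →
      (if C (ι k) then Z (ι k) else Y (ι k)) = W k := by
    intro C k hk1 hk2 hc
    by_cases hs : W k = Y (ι k)
    · have hst : side k = true := by simp [hsidedef, hs]
      rw [hc, hst]
      simp [hs]
    · have hsf : side k = false := by simp [hsidedef, hs]
      have hz : W k = Z (ι k) := (hι k (Finset.mem_Icc.mpr ⟨hk1, hk2⟩)).resolve_left hs
      rw [hc, hsf]
      simp [hz]
  set R : (Fin n → Bool) → ℝ := fun C =>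
    gamblerReward hn π (fun i => if C i then Y i else Z i)
      (fun i => if C i then Z i else Y i) with hR
  -- rewards on the events
  have hPreward : ∀ j, 2 ≤ j → j ≤ jstar - 1 → ∀ C : Fin n → Bool,
      (∀ k ∈ Finset.Icc 1 j, C (ι k) = (if k < j then side k else !side k)) →
      W (j - 1) ≤ R C := by
    intro j h2j hjle C hPC
    apply reward_ge hn Y Z hYZ hdistinct W hWanti hWrange ι π j h2j (by omega) C
    · intro k hk1 hkj
      have hc := hPC k (Finset.mem_Icc.mpr ⟨hk1, by omega⟩)
      rw [if_pos hkj] at hc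
      exact hXside C k hk1 (by omega) hc
    · have hc := hPC j (Finset.mem_Icc.mpr ⟨by omega, le_rfl⟩)
      rw [if_neg (lt_irrefl j)] at hc
      exact hXtside C j (by omega) (by omega) hc
  have hQreward : ∀ C : Fin n → Bool,
      (∀ k ∈ Finset.Icc 1 (jstar - 1), C (ι k) = side k) →
      W (jstar - 1) ≤ R C := by
    intro C hQC
    apply reward_ge hn Y Z hYZ hdistinct W hWanti hWrange ι π jstar hjs2 hjs2n C
    · intro k hk1 hkj
      exact hXside C k hk1 (by omega) (hQC k (Finset.mem_Icc.mpr ⟨hk1, by omega⟩))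
    · have hXℓ : (if C (ι ℓ) then Y (ι ℓ) else Z (ι ℓ)) = W ℓ :=
        hXside C ℓ hℓ1 (by omega) (hQC ℓ (Finset.mem_Icc.mpr ⟨hℓ1, by omega⟩))
      have hWjs : W jstar = Y (ι jstar) ∨ W jstar = Z (ι jstar) :=
        hι jstar (Finset.mem_Icc.mpr ⟨by omega, hjs2n⟩)
      have hWne : W ℓ ≠ W jstar := (hWanti ⟨hℓ1, by omega⟩ ⟨by omega, hjs2n⟩ hℓjs).ne'
      rw [← hℓι] at hWjs ⊢
      by_cases hc : C (ι ℓ)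
      · rw [if_pos hc] at hXℓ
        rw [if_pos hc]
        rcases hWjs with h | h
        · exact absurd (h.trans hXℓ).symm hWne
        · exact h.symm
      · rw [if_neg hc] at hXℓ
        rw [if_neg hc]
        rcases hWjs with h | h
        · exact h.symm
        · exact absurd (h.trans hXℓ).symm hWne
  -- the reward is always nonnegative
  have hR0 : ∀ C : Fin n → Bool, 0 ≤ R C := by
    intro C
    rw [hR]
    simp only [gamblerReward]
    split_ifs with h hc
    · exact le_of_lt (lt_of_le_of_lt (hZnonneg _) (hYZ _))
    · exact hZnonneg _
    · exact le_refl (0:ℝ)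
  -- pointwise lower bound for the reward
  have hpoint : ∀ C : Fin n → Bool,
      (∑ j ∈ Finset.Icc 2 (jstar - 1),
          indic (∀ k ∈ Finset.Icc 1 j, C (ι k) = (if k < j then side k else !side k))
            (W (j - 1)))
        + indic (∀ k ∈ Finset.Icc 1 (jstar - 1), C (ι k) = side k)
            (W (jstar - 1)) ≤ R C := by
    intro C
    by_cases hQC : ∀ k ∈ Finset.Icc 1 (jstar - 1), C (ι k) = side k
    · have hz : ∀ j ∈ Finset.Icc 2 (jstar - 1),
          indic (∀ k ∈ Finset.Icc 1 j, C (ι k) = (if k < j then side k else !side k))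
            (W (j - 1)) = 0 := by
        intro j hj
        rw [Finset.mem_Icc] at hj
        apply indic_neg
        intro hPC
        have h1 := hPC j (Finset.mem_Icc.mpr ⟨by omega, le_rfl⟩)
        rw [if_neg (lt_irrefl j)] at h1
        have h2 := hQC j (Finset.mem_Icc.mpr ⟨by omega, hj.2⟩)
        rw [h2] at h1
        simp at h1
      rw [Finset.sum_eq_zero hz, indic_pos hQC, zero_add]
      exact hQreward C hQC
    · rw [indic_neg hQC, add_zero]
      by_cases hex : ∃ j, j ∈ Finset.Icc 2 (jstar - 1) ∧
          (∀ k ∈ Finset.Icc 1 j, C (ι k) = (if k < j then side k else !side k))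
      · obtain ⟨j, hjmem', hPj⟩ := hex
        rw [Finset.sum_eq_single_of_mem j hjmem']
        · rw [indic_pos hPj]
          rw [Finset.mem_Icc] at hjmem'
          exact hPreward j hjmem'.1 hjmem'.2 C hPj
        · intro j' hj' hnej
          apply indic_neg
          intro hPj'
          rw [Finset.mem_Icc] at hj'
          rw [Finset.mem_Icc] at hjmem'
          rcases Nat.lt_or_ge j' j with h | h
          · have h1 := hPj j' (Finset.mem_Icc.mpr ⟨by omega, by omega⟩)
            rw [if_pos h] at h1
            have h2 := hPj' j' (Finset.mem_Icc.mpr ⟨by omega, le_rfl⟩)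
            rw [if_neg (lt_irrefl j')] at h2
            rw [h1] at h2
            simp at h2
          · have hlt : j < j' := by omega
            have h1 := hPj' j (Finset.mem_Icc.mpr ⟨by omega, by omega⟩)
            rw [if_pos hlt] at h1
            have h2 := hPj j (Finset.mem_Icc.mpr ⟨by omega, le_rfl⟩)
            rw [if_neg (lt_irrefl j)] at h2
            rw [h1] at h2
            simp at h2
      · rw [Finset.sum_eq_zero (fun j hj => indic_neg (fun hP => hex ⟨j, hj, hP⟩) _)]
        exact hR0 C
  -- summing the pointwise bound over all coin configurations
  have hsum : (∑ j ∈ Finset.Icc 2 (jstar - 1), W (j - 1) * 2 ^ (n - j))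
      + W (jstar - 1) * 2 ^ (n - (jstar - 1)) ≤ ∑ C : Fin n → Bool, R C := by
    have hle := Finset.sum_le_sum (fun C (_ : C ∈ Finset.univ) => hpoint C)
    refine le_trans (le_of_eq ?_) hle
    rw [Finset.sum_add_distrib, Finset.sum_comm]
    congr 1
    · apply Finset.sum_congr rfl
      intro j hj
      rw [Finset.mem_Icc] at hj
      symm
      rw [sum_indic_const, card_event ι j
        (hinj.mono (by intro x hx; simp only [Finset.coe_Icc, Set.mem_Icc] at hx ⊢; omega))
        (fun k => if k < j then side k else !side k)]
      push_cast
      ring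
    · symm
      rw [sum_indic_const, card_event ι (jstar - 1)
        (by simpa using hinj) side]
      push_cast
      ring
  -- final arithmetic
  rw [le_div_iff₀ (by positivity : (0:ℝ) < 2 ^ n)]
  refine le_trans (le_of_eq ?_) hsum
  rw [add_mul, Finset.sum_mul]
  congr 1
  · have hmap : Finset.Icc 2 (jstar - 1)
        = Finset.map (addRightEmbedding 1) (Finset.Icc 1 (jstar - 2)) := by
      rw [Finset.map_add_right_Icc]
      congr 1 <;> omega
    rw [hmap, Finset.sum_map]
    apply Finset.sum_congr rfl
    intro j hj
    rw [Finset.mem_Icc] at hj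
    simp only [addRightEmbedding_apply]
    have hj1 : j + 1 - 1 = j := by omega
    rw [hj1, pow_sub_eq (show j + 1 ≤ n by omega), div_mul_eq_mul_div, mul_div_assoc]
  · rw [pow_sub_eq hjsn, div_mul_eq_mul_div, mul_div_assoc]
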